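/- Let X be a vector space over a subfield R of the reals, and let f, g : X → ℝ be R-linear functionals. Then {x : g x ≤ 0} ⊇ {x : f x ≤ 0} if and only if there exists α ∈ ℝ, α ≥ 0, such that g = α • f. -/
import Mathlib


theorem stmt0 (R : Subfield ℝ) (X : Type*) [AddCommGroup X] [Module R X]
    (f g : X →ₗ[R] ℝ) :
    {x : X | f x ≤ 0} ⊆ {x : X | g x ≤ 0} ↔
      ∃ α : ℝ, 0 ≤ α ∧ ∀ x, g x = α * f x := by
  constructor
  · intro h
    by_cases hf : ∀ x, f x = 0
    · refine ⟨0, le_refl _, fun x => ?_⟩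
      have h1 : g x ≤ 0 := h (by simp [Set.mem_setOf_eq, hf x])
      have h2 : g (-x) ≤ 0 := h (by simp [Set.mem_setOf_eq, hf (-x)])
      rw [map_neg] at h2
      simp only [hf x, mul_zero]
      linarith
    · push_neg at hf
      obtain ⟨y, hy⟩ := hf
      obtain ⟨x₀, hx₀⟩ : ∃ x₀, 0 < f x₀ := by
        rcases hy.lt_or_gt with h1 | h1
        · exact ⟨-y, by rw [map_neg]; linarith⟩
        · exact ⟨y, h1⟩
      have hg0 : 0 ≤ g x₀ := by
        have := h (show -x₀ ∈ {x : X | f x ≤ 0} by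
          simp only [Set.mem_setOf_eq, map_neg]; linarith)
        simp only [Set.mem_setOf_eq, map_neg] at this
        linarith
      set α := g x₀ / f x₀ with hα
      have hαnn : 0 ≤ α := div_nonneg hg0 hx₀.le
      have smul_eq : ∀ (q : ℚ) (x : X), f ((q : R) • x) = (q : ℝ) * f x ∧
          g ((q : R) • x) = (q : ℝ) * g x := by
        intro q x
        constructor <;> rw [map_smul] <;> simp [Subfield.smul_def]
      have key : ∀ x, g x ≤ α * f x := by
        intro x
        have hq : ∀ q : ℚ, f x / f x₀ < (q : ℝ) → g x ≤ (q : ℝ) * g x₀ := by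
          intro q hqlt
          have hfx : f x < (q : ℝ) * f x₀ := by
            rw [div_lt_iff₀ hx₀] at hqlt
            linarith
          have hmem : x - (q : R) • x₀ ∈ {x : X | f x ≤ 0} := by
            simp only [Set.mem_setOf_eq, map_sub, (smul_eq q x₀).1]
            linarith
          have := h hmem
          simp only [Set.mem_setOf_eq, map_sub, (smul_eq q x₀).2] at this
          linarith
        by_contra hc
        push_neg at hc
        rcases hg0.lt_or_eq with hgp | hgz
        · have hlt : f x / f x₀ < g x / g x₀ := by
            rw [div_lt_div_iff₀ hx₀ hgp]
            rw [hα, div_mul_eq_mul_div] at hc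
            have := (div_lt_iff₀ hx₀).mp hc
            linarith
          obtain ⟨q, hq1, hq2⟩ := exists_rat_btwn hlt
          have := hq q hq1
          have := (lt_div_iff₀ hgp).mp hq2
          linarith
        · obtain ⟨q, hq1⟩ := exists_rat_gt (f x / f x₀)
          have := hq q hq1
          rw [← hgz] at this
          have hα0 : α = 0 := by rw [hα, ← hgz, zero_div]
          rw [hα0, zero_mul] at hc
          linarith
      refine ⟨α, hαnn, fun x => le_antisymm (key x) ?_⟩
      have := key (-x)
      rw [map_neg, map_neg] at this
      linarith
  · rintro ⟨α, hα, hg⟩ x hx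
    simp only [Set.mem_setOf_eq] at hx ⊢
    rw [hg]
    exact mul_nonpos_of_nonneg_of_nonpos hα hx
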